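/- Fix 1 ≤ d ≤ n. Let z, z' be invertible symmetric real n×n matrices and y, y' ∈ M_{n,d}(ℝ) be such that ᵗy·z⁻¹·y and ᵗy'·z'⁻¹·y' are invertible. Then the following are equivalent: (i) there exist h ∈ GL_n(ℝ) and m ∈ GL_d(ℝ) with h·z·ᵗh = z' and h·y·ᵗm = y'; (ii) there exists g ∈ GL_n(ℝ) with g·z·ᵗg = z' and there exists c ∈ GL_d(ℝ) with c·(ᵗy·z⁻¹·y)·ᵗc = ᵗy'·z'⁻¹·y'. Consequently, the pairs (z, y) with fixed signature (p,q) of z and fixed signature (s,t) of ᵗy·z⁻¹·y (with s + t = d) form a single orbit of GL_n(ℝ) × GL_d(ℝ) acting on Sym_n(ℝ) × M_{n,d}(ℝ) by (h,m)·(z,y) = (h·z·ᵗh, h·y·ᵗm). -/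

import Mathlib

open Matrix
namespace Stmt10Aux
variable {ι κ : Type*} [Fintype ι] [DecidableEq ι] [Fintype κ] [DecidableEq κ]

def MCong (a b : Matrix ι ι ℝ) : Prop := ∃ g, IsUnit g ∧ g * a * gᵀ = b

lemma MCong.refl (a : Matrix ι ι ℝ) : MCong a a := ⟨1, isUnit_one, by simp⟩

lemma inv_mul_self {g : Matrix ι ι ℝ} (hg : IsUnit g) : g⁻¹ * g = 1 :=
  Matrix.nonsing_inv_mul g (Matrix.isUnit_iff_isUnit_det g |>.1 hg)

lemma mul_inv_self {g : Matrix ι ι ℝ} (hg : IsUnit g) : g * g⁻¹ = 1 :=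
  Matrix.mul_nonsing_inv g (Matrix.isUnit_iff_isUnit_det g |>.1 hg)

lemma isUnit_inv {g : Matrix ι ι ℝ} (hg : IsUnit g) : IsUnit g⁻¹ := by
  rw [← hg.unit_spec, ← Matrix.coe_units_inv]; exact (hg.unit⁻¹).isUnit

lemma MCong.symm {a b : Matrix ι ι ℝ} : MCong a b → MCong b a := by
  rintro ⟨g, hg, rfl⟩
  refine ⟨g⁻¹, isUnit_inv hg, ?_⟩
  rw [Matrix.transpose_nonsing_inv]
  calc g⁻¹ * (g * a * gᵀ) * (gᵀ)⁻¹ = (g⁻¹ * g) * a * (gᵀ * (gᵀ)⁻¹) := by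
        simp only [Matrix.mul_assoc]
    _ = a := by rw [inv_mul_self hg, mul_inv_self ((Matrix.isUnit_transpose g).2 hg)]; simp

lemma MCong.trans {a b c : Matrix ι ι ℝ} (h1 : MCong a b) (h2 : MCong b c) : MCong a c := by
  obtain ⟨g, hg, rfl⟩ := h1
  obtain ⟨g', hg', rfl⟩ := h2
  exact ⟨g' * g, hg'.mul hg, by rw [Matrix.transpose_mul]; simp only [Matrix.mul_assoc]⟩

lemma MCong.inv {a b : Matrix ι ι ℝ} (_ : IsUnit a) (h : MCong a b) : MCong a⁻¹ b⁻¹ := by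
  obtain ⟨g, hg, rfl⟩ := h
  refine ⟨(g⁻¹)ᵀ, (Matrix.isUnit_transpose _).2 (isUnit_inv hg), ?_⟩
  rw [Matrix.mul_inv_rev, Matrix.mul_inv_rev, Matrix.transpose_transpose,
    Matrix.transpose_nonsing_inv, Matrix.mul_assoc]

-- spectral: symmetric invertible real matrix is congruent to a ±1 diagonal
lemma exists_sign_diag (a : Matrix ι ι ℝ) (ha : a.IsSymm) (hu : IsUnit a) :
    ∃ ε : ι → ℝ, (∀ i, ε i = 1 ∨ ε i = -1) ∧ MCong a (Matrix.diagonal ε) := by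
  have hherm : a.IsHermitian := ha
  have hdet : a.det ≠ 0 := by
    intro h
    have := (Matrix.isUnit_iff_isUnit_det a).1 hu
    rw [h] at this; exact this.ne_zero rfl
  have heig : ∀ i, hherm.eigenvalues i ≠ 0 := by
    intro i hi
    apply hdet
    rw [hherm.det_eq_prod_eigenvalues]
    exact Finset.prod_eq_zero (Finset.mem_univ i) (by exact_mod_cast hi)
  set U := (hherm.eigenvectorUnitary : Matrix ι ι ℝ) with hU
  set μ := hherm.eigenvalues with hμ
  refine ⟨fun i => if 0 < μ i then (1:ℝ) else -1, fun i => by by_cases h : 0 < μ i <;> simp [h], ?_⟩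
  apply MCong.symm
  set s := Matrix.diagonal (fun i => Real.sqrt |μ i|) with hs
  have hsd : s * Matrix.diagonal (fun i => if 0 < μ i then (1:ℝ) else -1) * sᵀ
      = Matrix.diagonal μ := by
    rw [Matrix.diagonal_transpose, hs, Matrix.diagonal_mul_diagonal,
      Matrix.diagonal_mul_diagonal]
    refine congrArg Matrix.diagonal (funext fun i => ?_)
    rcases lt_trichotomy (μ i) 0 with h | h | h
    · have : ¬ (0 < μ i) := by linarith
      rw [if_neg this]
      rw [abs_of_neg h]
      have := Real.mul_self_sqrt (le_of_lt (neg_pos.2 h))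
      nlinarith [this]
    · exact absurd h (heig i)
    · rw [if_pos h]
      rw [abs_of_pos h, mul_one]
      exact Real.mul_self_sqrt (le_of_lt h)
  have hspec := hherm.spectral_theorem
  have hstar : (star U : Matrix ι ι ℝ) = Uᵀ := rfl
  have hUunit : IsUnit U := by
    have h1 : (star U) * U = 1 := (Matrix.mem_unitaryGroup_iff').mp hherm.eigenvectorUnitary.2
    have h2 : U * (star U) = 1 := (Matrix.mem_unitaryGroup_iff).mp hherm.eigenvectorUnitary.2
    exact isUnit_iff_exists.2 ⟨star U, h2, h1⟩
  have hsunit : IsUnit s := by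
    rw [Matrix.isUnit_iff_isUnit_det, hs, Matrix.det_diagonal]
    refine (Finset.prod_ne_zero_iff.2 fun i _ => ?_).isUnit
    exact Real.sqrt_ne_zero'.2 (abs_pos.2 (heig i))
  refine ⟨U * s, hUunit.mul hsunit, ?_⟩
  have hdiagμ : Matrix.diagonal (RCLike.ofReal ∘ μ) = Matrix.diagonal μ := by
    congr 1
  rw [Matrix.transpose_mul]
  calc U * s * Matrix.diagonal (fun i => if 0 < μ i then (1:ℝ) else -1) * (sᵀ * Uᵀ)
      = U * (s * Matrix.diagonal (fun i => if 0 < μ i then (1:ℝ) else -1) * sᵀ) * Uᵀ := by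
        simp only [Matrix.mul_assoc, hs]
    _ = U * Matrix.diagonal μ * Uᵀ := by rw [hsd]
    _ = a := by rw [← hstar, ← hdiagμ]; rw [Unitary.conjStarAlgAut_apply] at hspec; exact hspec.symm

lemma count_le (ε ε' : ι → ℝ) (hε : ∀ i, ε i = 1 ∨ ε i = -1) (hε' : ∀ i, ε' i = 1 ∨ ε' i = -1)
    (g : Matrix ι ι ℝ) (hg : g * Matrix.diagonal ε * gᵀ = Matrix.diagonal ε') :
    Fintype.card {i // ε' i = 1} ≤ Fintype.card {i // ε i = 1} := by
  classical
  let ext : ({i // ε' i = 1} → ℝ) →ₗ[ℝ] (ι → ℝ) :=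
    { toFun := fun v i => if h : ε' i = 1 then v ⟨i, h⟩ else 0
      map_add' := by intro v w; funext i; by_cases h : ε' i = 1 <;> simp [h]
      map_smul' := by intro c v; funext i; by_cases h : ε' i = 1 <;> simp [h] }
  let L : ({i // ε' i = 1} → ℝ) →ₗ[ℝ] ({i // ε i = 1} → ℝ) :=
    (LinearMap.funLeft ℝ ℝ Subtype.val).comp ((Matrix.mulVecLin gᵀ).comp ext)
  have hinj : Function.Injective L := by
    rw [← LinearMap.ker_eq_bot, eq_bot_iff]
    intro v hv
    simp only [LinearMap.mem_ker] at hv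
    have hxv : ∀ i (h : ε' i = 1), ext v i = v ⟨i, h⟩ := by
      intro i h; simp only [ext, LinearMap.coe_mk, AddHom.coe_mk, dif_pos h]
    have hxv0 : ∀ i, ¬ (ε' i = 1) → ext v i = 0 := by
      intro i h; simp only [ext, LinearMap.coe_mk, AddHom.coe_mk, dif_neg h]
    have hLv : ∀ j : {i // ε i = 1}, (gᵀ *ᵥ ext v) j.val = 0 := by
      intro j
      have : L v j = 0 := by rw [hv]; rfl
      exact this
    set x : ι → ℝ := ext v with hx
    set u : ι → ℝ := gᵀ *ᵥ x with hu
    have hu0 : ∀ i, ε i = 1 → u i = 0 := fun i hi => hLv ⟨i, hi⟩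
    have hS : x ⬝ᵥ (Matrix.diagonal ε' *ᵥ x) = u ⬝ᵥ (Matrix.diagonal ε *ᵥ u) := by
      rw [← hg, hu, ← Matrix.mulVec_mulVec, Matrix.dotProduct_mulVec, ← Matrix.mulVec_transpose,
        Matrix.transpose_mul, Matrix.diagonal_transpose, ← Matrix.mulVec_mulVec,
        dotProduct_comm]
    have hS1 : x ⬝ᵥ (Matrix.diagonal ε' *ᵥ x) = ∑ i, x i * (ε' i * x i) := by
      simp only [dotProduct, Matrix.mulVec_diagonal]
    have hS2 : u ⬝ᵥ (Matrix.diagonal ε *ᵥ u) = ∑ i, u i * (ε i * u i) := by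
      simp only [dotProduct, Matrix.mulVec_diagonal]
    have hterm1 : ∀ i, x i * (ε' i * x i) = x i * x i := by
      intro i
      rcases hε' i with h | h
      · rw [h, one_mul]
      · have hne : ¬ (ε' i = 1) := by rw [h]; norm_num
        rw [hxv0 i hne]
        simp
    have hle : ∑ i, u i * (ε i * u i) ≤ 0 := by
      apply Finset.sum_nonpos
      intro i _
      rcases hε i with h | h
      · rw [hu0 i h]; simp
      · rw [h]; nlinarith [mul_self_nonneg (u i)]
    have hsum : ∑ i, x i * x i ≤ 0 := by
      calc ∑ i, x i * x i = ∑ i, x i * (ε' i * x i) :=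
            (Finset.sum_congr rfl fun i _ => (hterm1 i)).symm
        _ = ∑ i, u i * (ε i * u i) := by rw [← hS1, ← hS2, hS]
        _ ≤ 0 := hle
    have h0 : ∀ j ∈ Finset.univ, 0 ≤ x j * x j := fun j _ => mul_self_nonneg (x j)
    have hx0 : ∀ i, x i = 0 := by
      intro i
      have := (Finset.sum_eq_zero_iff_of_nonneg h0).1
        (le_antisymm hsum (Finset.sum_nonneg h0)) i (Finset.mem_univ i)
      nlinarith [this]
    have hv0 : v = 0 := by
      funext j
      have h2 := hxv j.val j.prop
      simp only [Subtype.coe_eta] at h2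
      have h3 := hx0 j.val
      rw [h2] at h3
      simpa using h3
    simp [hv0]
  have hfin := LinearMap.finrank_le_finrank_of_injective hinj
  simpa [Module.finrank_pi] using hfin

lemma mcong_submatrix (M : Matrix ι ι ℝ) (σ : Equiv.Perm ι) : MCong M (M.submatrix σ σ) := by
  refine ⟨σ.permMatrix ℝ, ?_, ?_⟩
  · rw [Matrix.isUnit_iff_isUnit_det, Matrix.det_permutation]
    rcases Int.units_eq_one_or (Equiv.Perm.sign σ) with h | h <;> simp [h]
  · have hPT : (σ.permMatrix ℝ)ᵀ = ((σ⁻¹ : Equiv.Perm ι).permMatrix ℝ) := by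
      ext i j
      simp only [Matrix.transpose_apply, Equiv.Perm.permMatrix, PEquiv.toMatrix_apply,
        Equiv.toPEquiv_apply, Option.mem_def, Option.some.injEq]
      by_cases h : σ j = i
      · rw [if_pos h, if_pos (by rw [← h]; simp)]
      · rw [if_neg h, if_neg (fun hh => h (by rw [← hh]; simp))]
    rw [hPT, Equiv.Perm.permMatrix, Equiv.Perm.permMatrix, PEquiv.toMatrix_toPEquiv_mul,
      PEquiv.mul_toMatrix_toPEquiv]
    ext i j
    simp only [Matrix.submatrix_apply, id]
    congr 1

lemma mcong_diag_of_count (ε ε' : ι → ℝ) (hε : ∀ i, ε i = 1 ∨ ε i = -1)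
    (hε' : ∀ i, ε' i = 1 ∨ ε' i = -1)
    (hc : Fintype.card {i // ε i = 1} = Fintype.card {i // ε' i = 1}) :
    MCong (Matrix.diagonal ε) (Matrix.diagonal ε') := by
  classical
  have hc2 : Fintype.card {i // ¬ ε i = 1} = Fintype.card {i // ¬ ε' i = 1} := by
    rw [Fintype.card_subtype_compl, Fintype.card_subtype_compl, hc]
  let e := Fintype.equivOfCardEq hc
  let f := Fintype.equivOfCardEq hc2
  let σ : Equiv.Perm ι := Equiv.subtypeCongr e f
  have hσ : ∀ i, ε' (σ i) = ε i := by
    intro i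
    by_cases h : ε i = 1
    · have : σ i = (e ⟨i, h⟩ : {j // ε' j = 1}).val := by
        simp [σ, Equiv.subtypeCongr, h]
      rw [this, (e ⟨i, h⟩).prop, h]
    · have : σ i = (f ⟨i, h⟩ : {j // ¬ ε' j = 1}).val := by
        simp [σ, Equiv.subtypeCongr, h]
      rw [this]
      rcases hε' (f ⟨i, h⟩).val with h1 | h1
      · exact absurd h1 (f ⟨i, h⟩).prop
      · rcases hε i with h2 | h2
        · exact absurd h2 h
        · rw [h1, h2]
  have hdiag : (Matrix.diagonal ε').submatrix σ σ = Matrix.diagonal ε := by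
    rw [Matrix.submatrix_diagonal_equiv]
    exact congrArg _ (funext fun i => hσ i)
  have := mcong_submatrix (Matrix.diagonal ε') σ
  rw [hdiag] at this
  exact this.symm

lemma isUnit_fromBlocks {a : Matrix ι ι ℝ} {r : Matrix κ κ ℝ} (ha : IsUnit a) (hr : IsUnit r) :
    IsUnit (Matrix.fromBlocks a 0 0 r) := by
  rw [Matrix.isUnit_iff_isUnit_det, Matrix.det_fromBlocks_zero₂₁]
  exact ((Matrix.isUnit_iff_isUnit_det a).1 ha).mul ((Matrix.isUnit_iff_isUnit_det r).1 hr)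

lemma mcong_blocks {a a' : Matrix ι ι ℝ} {r r' : Matrix κ κ ℝ} (h1 : MCong a a')
    (h2 : MCong r r') :
    MCong (Matrix.fromBlocks a 0 0 r) (Matrix.fromBlocks a' 0 0 r') := by
  obtain ⟨g, hg, rfl⟩ := h1
  obtain ⟨e, he, rfl⟩ := h2
  refine ⟨Matrix.fromBlocks g 0 0 e, isUnit_fromBlocks hg he, ?_⟩
  rw [Matrix.fromBlocks_transpose, Matrix.fromBlocks_multiply, Matrix.fromBlocks_multiply]
  simp

lemma mcong_submatrix_equiv {κ' : Type*} [Fintype κ'] [DecidableEq κ'] (e : κ' ≃ ι)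
    (M N : Matrix ι ι ℝ) (h : MCong M N) : MCong (M.submatrix e e) (N.submatrix e e) := by
  obtain ⟨g, hg, rfl⟩ := h
  refine ⟨g.submatrix e e, ?_, ?_⟩
  · rw [Matrix.isUnit_iff_isUnit_det, Matrix.det_submatrix_equiv_self]
    exact (Matrix.isUnit_iff_isUnit_det g).1 hg
  · rw [Matrix.transpose_submatrix, Matrix.submatrix_mul_equiv, Matrix.submatrix_mul_equiv]

def eqv (n d : ℕ) (h : d ≤ n) : Fin n ≃ (Fin d ⊕ Fin (n - d)) :=
  (finCongr (by omega)).trans finSumFinEquiv.symm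

set_option maxHeartbeats 1600000 in
lemma reduce (n d : ℕ) (hdn : d ≤ n) (z : Matrix (Fin n) (Fin n) ℝ) (hz : z.IsSymm)
    (huz : IsUnit z) (y : Matrix (Fin n) (Fin d) ℝ) (hy : IsUnit (yᵀ * z⁻¹ * y)) :
    ∃ (h₀ : Matrix (Fin n) (Fin n) ℝ) (r : Matrix (Fin (n-d)) (Fin (n-d)) ℝ),
      IsUnit h₀ ∧ r.IsSymm ∧ IsUnit r ∧
      h₀ * z * h₀ᵀ =
        ((Matrix.fromBlocks (yᵀ * z⁻¹ * y) 0 0 r).submatrix (eqv n d hdn) (eqv n d hdn))⁻¹ ∧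
      h₀ * y = (Matrix.fromRows (1 : Matrix (Fin d) (Fin d) ℝ)
        (0 : Matrix (Fin (n-d)) (Fin d) ℝ)).submatrix (eqv n d hdn) id := by
  classical
  set w := z⁻¹ with hwdef
  have hdetz : IsUnit z.det := (Matrix.isUnit_iff_isUnit_det z).1 huz
  have hwsymm : wᵀ = w := by
    rw [hwdef, Matrix.transpose_nonsing_inv, hz.eq]
  have huw : IsUnit w := isUnit_inv huz
  set b := yᵀ * w * y with hbdef
  have hb : IsUnit b := hy
  have hdetb : IsUnit b.det := (Matrix.isUnit_iff_isUnit_det b).1 hb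
  set L := (yᵀ * w).mulVecLin with hLdef
  have hLapp : ∀ v, L v = (yᵀ * w) *ᵥ v := fun v => rfl
  have hLsurj : Function.Surjective L := by
    intro x
    refine ⟨y *ᵥ (b⁻¹ *ᵥ x), ?_⟩
    have h1 : yᵀ * w * y * b⁻¹ = 1 := by rw [← hbdef, Matrix.mul_nonsing_inv _ hdetb]
    rw [hLapp, Matrix.mulVec_mulVec, Matrix.mulVec_mulVec, h1, Matrix.one_mulVec]
  have hker : Module.finrank ℝ (LinearMap.ker L) = n - d := by
    have h1 := LinearMap.finrank_range_add_finrank_ker L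
    rw [LinearMap.range_eq_top.2 hLsurj] at h1
    rw [finrank_top] at h1
    simp only [Module.finrank_pi, Fintype.card_fin] at h1
    omega
  set B := (Module.finBasis ℝ (LinearMap.ker L)).reindex (finCongr hker) with hBdef
  set Q : Matrix (Fin n) (Fin (n-d)) ℝ :=
    Matrix.of (fun i j => ((B j : LinearMap.ker L) : Fin n → ℝ) i) with hQdef
  have hQcol : ∀ v : Fin (n-d) → ℝ,
      Q *ᵥ v = ((∑ j, v j • (B j)) : LinearMap.ker L) := by
    intro v
    funext i
    rw [Matrix.mulVec]
    simp only [dotProduct, hQdef, Matrix.of_apply]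
    rw [AddSubmonoidClass.coe_finset_sum]
    rw [Finset.sum_apply]
    exact Finset.sum_congr rfl fun j _ => by simp [mul_comm]
  have hQker : ∀ v : Fin (n-d) → ℝ, (yᵀ * w) *ᵥ (Q *ᵥ v) = 0 := by
    intro v
    rw [hQcol]
    exact (LinearMap.mem_ker).1 (∑ j, v j • (B j) : LinearMap.ker L).2
  have hywQ : yᵀ * w * Q = 0 := by
    ext i j
    have := congrFun (hQker (Pi.single j 1)) i
    rw [Matrix.mulVec_mulVec] at this
    rw [Matrix.mulVec_single] at this
    simpa using this
  have hQinj : ∀ v : Fin (n-d) → ℝ, Q *ᵥ v = 0 → v = 0 := by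
    intro v hv
    rw [hQcol] at hv
    have hsum : (∑ j, v j • (B j)) = (0 : LinearMap.ker L) := by
      exact Subtype.ext (by simpa using hv)
    have hli := B.linearIndependent
    rw [Fintype.linearIndependent_iff] at hli
    funext j
    exact hli v hsum j
  have hQspan : ∀ x : Fin n → ℝ, x ∈ LinearMap.ker L → ∃ v, Q *ᵥ v = x := by
    intro x hx
    refine ⟨fun j => B.repr ⟨x, hx⟩ j, ?_⟩
    rw [hQcol]
    have := B.sum_repr ⟨x, hx⟩
    rw [this]
  set r := Qᵀ * w * Q with hrdef
  have hrsymm : r.IsSymm := by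
    rw [Matrix.IsSymm, hrdef, Matrix.transpose_mul, Matrix.transpose_mul,
      Matrix.transpose_transpose, hwsymm, Matrix.mul_assoc]
  have hQwy : Qᵀ * w * y = 0 := by
    have h := congrArg Matrix.transpose hywQ
    rw [Matrix.transpose_mul, Matrix.transpose_mul, Matrix.transpose_transpose, hwsymm,
      Matrix.transpose_zero] at h
    rw [Matrix.mul_assoc]
    exact h
  -- r is invertible
  have hr : IsUnit r := by
    rw [← Matrix.mulVec_injective_iff_isUnit]
    have hlin : ∀ v₁ v₂ : Fin (n-d) → ℝ, r *ᵥ (v₁ - v₂) = r *ᵥ v₁ - r *ᵥ v₂ := fun v₁ v₂ =>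
      Matrix.mulVec_sub r v₁ v₂
    intro v₁ v₂ hv
    have hv0 : r *ᵥ (v₁ - v₂) = 0 := by rw [hlin, hv, sub_self]
    set v := v₁ - v₂ with hvdef
    have key : v = 0 := by
      set x := Q *ᵥ v with hxdef
      set t := w *ᵥ x with htdef
      have hyt : yᵀ *ᵥ t = 0 := by
        rw [htdef, Matrix.mulVec_mulVec, hxdef, Matrix.mulVec_mulVec, hywQ,
          Matrix.zero_mulVec]
      have hQt : Qᵀ *ᵥ t = 0 := by
        rw [htdef, Matrix.mulVec_mulVec, hxdef, Matrix.mulVec_mulVec, ← hrdef]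
        exact hv0
      have ht : t = 0 := by
        have hdot : ∀ u : Fin n → ℝ, u ⬝ᵥ t = 0 := by
          intro u
          have h1 : yᵀ * w * y * b⁻¹ * (yᵀ * w) = yᵀ * w := by
            rw [← hbdef, Matrix.mul_nonsing_inv _ hdetb, Matrix.one_mul]
          have hu' : (yᵀ * w) *ᵥ (u - y *ᵥ (b⁻¹ *ᵥ ((yᵀ * w) *ᵥ u))) = 0 := by
            rw [Matrix.mulVec_sub, Matrix.mulVec_mulVec, Matrix.mulVec_mulVec,
              Matrix.mulVec_mulVec, h1, sub_self]
          obtain ⟨c, hc⟩ := hQspan _ hu'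
          have hudecomp : u = y *ᵥ (b⁻¹ *ᵥ ((yᵀ * w) *ᵥ u)) + Q *ᵥ c := by rw [hc]; abel
          rw [hudecomp, add_dotProduct]
          have h3 : (y *ᵥ (b⁻¹ *ᵥ ((yᵀ * w) *ᵥ u))) ⬝ᵥ t
              = (b⁻¹ *ᵥ ((yᵀ * w) *ᵥ u)) ⬝ᵥ (yᵀ *ᵥ t) := by
            rw [dotProduct_comm, Matrix.dotProduct_mulVec, ← Matrix.mulVec_transpose,
              dotProduct_comm]
          have h2 : (Q *ᵥ c) ⬝ᵥ t = c ⬝ᵥ (Qᵀ *ᵥ t) := by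
            rw [dotProduct_comm, Matrix.dotProduct_mulVec, ← Matrix.mulVec_transpose,
              dotProduct_comm]
          rw [h3, h2, hyt, hQt]
          simp
        have := hdot t
        have hsq : ∑ i, t i * t i = 0 := this
        funext i
        simp only [Pi.zero_apply]
        have h0 : ∀ j ∈ Finset.univ, 0 ≤ t j * t j := fun j _ => mul_self_nonneg (t j)
        have := (Finset.sum_eq_zero_iff_of_nonneg h0).1 hsq i (Finset.mem_univ i)
        exact mul_self_eq_zero.mp this
      have hx0 : x = 0 := by
        have : z *ᵥ t = x := by
          rw [htdef, Matrix.mulVec_mulVec, hwdef, Matrix.mul_nonsing_inv _ hdetz,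
            Matrix.one_mulVec]
        rw [← this, ht, Matrix.mulVec_zero]
      exact hQinj v hx0
    exact sub_eq_zero.1 key
  set T := Matrix.fromCols y Q with hTdef
  set T' := Matrix.fromRows (b⁻¹ * (yᵀ * w)) (r⁻¹ * (Qᵀ * w)) with hT'def
  have hdetr : IsUnit r.det := (Matrix.isUnit_iff_isUnit_det r).1 hr
  have e1 : b⁻¹ * (yᵀ * w) * y = 1 := by
    rw [Matrix.mul_assoc, ← hbdef, Matrix.nonsing_inv_mul _ hdetb]
  have e2 : b⁻¹ * (yᵀ * w) * Q = 0 := by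
    rw [Matrix.mul_assoc, hywQ, Matrix.mul_zero]
  have e3 : r⁻¹ * (Qᵀ * w) * y = 0 := by
    rw [Matrix.mul_assoc, hQwy, Matrix.mul_zero]
  have e4 : r⁻¹ * (Qᵀ * w) * Q = 1 := by
    rw [Matrix.mul_assoc, ← hrdef, Matrix.nonsing_inv_mul _ hdetr]
  have hT'T : T' * T = 1 := by
    rw [hT'def, hTdef, Matrix.fromRows_mul_fromCols, e1, e2, e3, e4, Matrix.fromBlocks_one]
  set E := eqv n d hdn with hEdef
  set S := T.submatrix id ⇑E with hSdef
  set S' := T'.submatrix ⇑E id with hS'def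
  have hS'S : S' * S = 1 := by
    rw [hS'def, hSdef, ← Matrix.submatrix_mul T' T ⇑E id ⇑E Function.bijective_id, hT'T,
      Matrix.submatrix_one_equiv]
  have hSS' : S * S' = 1 := mul_eq_one_comm.mp hS'S
  have hSunit : IsUnit S := isUnit_iff_exists.2 ⟨S', hSS', hS'S⟩
  have hS'unit : IsUnit S' := isUnit_iff_exists.2 ⟨S, hS'S, hSS'⟩
  have hSinv : S⁻¹ = S' := Matrix.inv_eq_left_inv hS'S
  refine ⟨S', r, hS'unit, hrsymm, hr, ?_, ?_⟩
  · have k1 : Sᵀ * w = (Tᵀ * w).submatrix ⇑E id := by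
      have := Matrix.submatrix_mul Tᵀ w ⇑E id id Function.bijective_id
      rw [hSdef, Matrix.transpose_submatrix]
      simpa using this.symm
    have k2 : Sᵀ * w * S = ((Tᵀ * w) * T).submatrix ⇑E ⇑E := by
      rw [k1, hSdef, ← Matrix.submatrix_mul (Tᵀ * w) T ⇑E id ⇑E Function.bijective_id]
    have k3 : Tᵀ * w * T = Matrix.fromBlocks b 0 0 r := by
      rw [hTdef, Matrix.transpose_fromCols, Matrix.fromRows_mul,
        Matrix.fromRows_mul_fromCols, hywQ, hQwy, ← hbdef, ← hrdef]
    have hW : ((Matrix.fromBlocks b 0 0 r).submatrix ⇑E ⇑E)⁻¹ = S' * z * S'ᵀ := by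
      rw [← k3, ← k2, Matrix.mul_inv_rev, Matrix.mul_inv_rev, ← Matrix.transpose_nonsing_inv,
        hSinv, hwdef, Matrix.nonsing_inv_nonsing_inv _ hdetz, ← Matrix.mul_assoc]
    exact hW.symm
  · have k4 : S' * y = (T' * y).submatrix ⇑E id := by
      have := Matrix.submatrix_mul T' y ⇑E id id Function.bijective_id
      rw [hS'def]
      simpa using this.symm
    have k5 : T' * y = Matrix.fromRows (1 : Matrix (Fin d) (Fin d) ℝ)
        (0 : Matrix (Fin (n-d)) (Fin d) ℝ) := by
      rw [hT'def, Matrix.fromRows_mul, e1, e3]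
    rw [k4, k5]

lemma count_eq_of_mcong (ε ε' : ι → ℝ) (hε : ∀ i, ε i = 1 ∨ ε i = -1)
    (hε' : ∀ i, ε' i = 1 ∨ ε' i = -1) (h : MCong (Matrix.diagonal ε) (Matrix.diagonal ε')) :
    Fintype.card {i // ε i = 1} = Fintype.card {i // ε' i = 1} := by
  have h2 := MCong.symm h
  obtain ⟨g, hg, hgd⟩ := h
  obtain ⟨g2, hg2, hgd2⟩ := h2
  exact le_antisymm (count_le ε' ε hε' hε g2 hgd2) (count_le ε ε' hε hε' g hgd)

lemma card_sum_subtype {α β : Type*} [Fintype α] [Fintype β] (p : α ⊕ β → Prop)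
    [DecidablePred p] :
    Fintype.card {x // p x}
      = Fintype.card {a // p (Sum.inl a)} + Fintype.card {b // p (Sum.inr b)} := by
  rw [Fintype.card_congr (Equiv.subtypeSum (p := p)), Fintype.card_sum]

end Stmt10Aux

open Stmt10Aux in
set_option maxHeartbeats 1600000 in
theorem stmt10 (n d : ℕ) (hd : 1 ≤ d) (hdn : d ≤ n)
    (z z' : Matrix (Fin n) (Fin n) ℝ) (hz : z.IsSymm) (hz' : z'.IsSymm)
    (huz : IsUnit z) (huz' : IsUnit z')
    (y y' : Matrix (Fin n) (Fin d) ℝ)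
    (hy : IsUnit (yᵀ * z⁻¹ * y)) (hy' : IsUnit (y'ᵀ * z'⁻¹ * y')) :
    (∃ (h : Matrix (Fin n) (Fin n) ℝ) (m : Matrix (Fin d) (Fin d) ℝ),
        IsUnit h ∧ IsUnit m ∧ h * z * hᵀ = z' ∧ h * y * mᵀ = y') ↔
      ((∃ g : Matrix (Fin n) (Fin n) ℝ, IsUnit g ∧ g * z * gᵀ = z') ∧
       (∃ c : Matrix (Fin d) (Fin d) ℝ, IsUnit c ∧
          c * (yᵀ * z⁻¹ * y) * cᵀ = y'ᵀ * z'⁻¹ * y')) := by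
  constructor
  · rintro ⟨h, m, hh, hm, hzeq, hyeq⟩
    have hdeth : IsUnit h.det := (Matrix.isUnit_iff_isUnit_det h).1 hh
    have hdethT : IsUnit hᵀ.det := by rw [Matrix.det_transpose]; exact hdeth
    refine ⟨⟨h, hh, hzeq⟩, ⟨m, hm, ?_⟩⟩
    subst hzeq; subst hyeq
    have c1 : (h * z * hᵀ)⁻¹ = hᵀ⁻¹ * (z⁻¹ * h⁻¹) := by
      rw [Matrix.mul_inv_rev, Matrix.mul_inv_rev]
    rw [c1, Matrix.transpose_mul, Matrix.transpose_mul, Matrix.transpose_transpose]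
    simp only [Matrix.mul_assoc]
    rw [Matrix.mul_nonsing_inv_cancel_left _ _ hdethT,
      Matrix.nonsing_inv_mul_cancel_left _ _ hdeth]
  · rintro ⟨⟨g, hg, hgz⟩, ⟨c, hc, hcb⟩⟩
    obtain ⟨h₀, r, hh₀, hrs, hru, hz0, hy0⟩ := reduce n d hdn z hz huz y hy
    obtain ⟨h₁, r', hh₁, hrs', hru', hz1, hy1⟩ := reduce n d hdn z' hz' huz' y' hy'
    set E := eqv n d hdn with hE
    set b := yᵀ * z⁻¹ * y with hbdef
    set b' := y'ᵀ * z'⁻¹ * y' with hb'def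
    have hbs : b.IsSymm := by
      rw [Matrix.IsSymm, hbdef, Matrix.transpose_mul, Matrix.transpose_mul,
        Matrix.transpose_transpose, Matrix.transpose_nonsing_inv, hz.eq, Matrix.mul_assoc]
    have hbs' : b'.IsSymm := by
      rw [Matrix.IsSymm, hb'def, Matrix.transpose_mul, Matrix.transpose_mul,
        Matrix.transpose_transpose, Matrix.transpose_nonsing_inv, hz'.eq, Matrix.mul_assoc]
    have hWmu : IsUnit (Matrix.fromBlocks b 0 0 r) := isUnit_fromBlocks hy hru
    have hWmu' : IsUnit (Matrix.fromBlocks b' 0 0 r') := isUnit_fromBlocks hy' hru'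
    have hWsu : IsUnit ((Matrix.fromBlocks b 0 0 r).submatrix ⇑E ⇑E) :=
      (Matrix.isUnit_submatrix_equiv E E).2 hWmu
    have hWsu' : IsUnit ((Matrix.fromBlocks b' 0 0 r').submatrix ⇑E ⇑E) :=
      (Matrix.isUnit_submatrix_equiv E E).2 hWmu'
    have hWm : MCong (Matrix.fromBlocks b 0 0 r) (Matrix.fromBlocks b' 0 0 r') := by
      have hA : MCong z ((Matrix.fromBlocks b 0 0 r).submatrix ⇑E ⇑E)⁻¹ := ⟨h₀, hh₀, hz0⟩
      have hB : MCong z' ((Matrix.fromBlocks b' 0 0 r').submatrix ⇑E ⇑E)⁻¹ := ⟨h₁, hh₁, hz1⟩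
      have hzz' : MCong z z' := ⟨g, hg, hgz⟩
      have h1 : MCong ((Matrix.fromBlocks b 0 0 r).submatrix ⇑E ⇑E)⁻¹
          ((Matrix.fromBlocks b' 0 0 r').submatrix ⇑E ⇑E)⁻¹ := (hA.symm.trans hzz').trans hB
      have h2 := h1.inv (isUnit_inv hWsu)
      rw [Matrix.nonsing_inv_nonsing_inv _ ((Matrix.isUnit_iff_isUnit_det _).1 hWsu),
        Matrix.nonsing_inv_nonsing_inv _ ((Matrix.isUnit_iff_isUnit_det _).1 hWsu')] at h2
      have h3 := mcong_submatrix_equiv E.symm _ _ h2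
      simpa [Matrix.submatrix_submatrix, Equiv.self_comp_symm] using h3
    obtain ⟨εb, hεb, hdb⟩ := exists_sign_diag b hbs hy
    obtain ⟨εb', hεb', hdb'⟩ := exists_sign_diag b' hbs' hy'
    obtain ⟨εr, hεr, hdr⟩ := exists_sign_diag r hrs hru
    obtain ⟨εr', hεr', hdr'⟩ := exists_sign_diag r' hrs' hru'
    have hsum : MCong (Matrix.diagonal (Sum.elim εb εr)) (Matrix.diagonal (Sum.elim εb' εr')) := by
      rw [← Matrix.fromBlocks_diagonal, ← Matrix.fromBlocks_diagonal]
      exact ((mcong_blocks hdb hdr).symm.trans hWm).trans (mcong_blocks hdb' hdr')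
    have hsc : Fintype.card {i // Sum.elim εb εr i = 1}
        = Fintype.card {i // Sum.elim εb' εr' i = 1} :=
      count_eq_of_mcong _ _ (fun i => by cases i <;> simp [hεb _, hεr _, hεb' _, hεr' _])
        (fun i => by cases i <;> simp [hεb _, hεr _, hεb' _, hεr' _]) hsum
    have hbc : Fintype.card {i // εb i = 1} = Fintype.card {i // εb' i = 1} :=
      count_eq_of_mcong _ _ hεb hεb' ((hdb.symm.trans ⟨c, hc, hcb⟩).trans hdb')
    have hrc : Fintype.card {i // εr i = 1} = Fintype.card {i // εr' i = 1} := by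
      have hs1 := card_sum_subtype (fun x => Sum.elim εb εr x = 1)
      have hs2 := card_sum_subtype (fun x => Sum.elim εb' εr' x = 1)
      simp only [Fintype.card_eq_nat_card] at hsc hbc hs1 hs2 ⊢
      simp only [Sum.elim_inl, Sum.elim_inr] at hs1 hs2
      omega
    have hrr' : MCong r r' :=
      (hdr.trans (mcong_diag_of_count εr εr' hεr hεr' hrc)).trans hdr'.symm
    obtain ⟨e, he, her⟩ := hrr'
    -- explicit inverse facts
    have hdetc : IsUnit c.det := (Matrix.isUnit_iff_isUnit_det c).1 hc
    have hdetcT : IsUnit cᵀ.det := by rw [Matrix.det_transpose]; exact hdetc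
    have hdete : IsUnit e.det := (Matrix.isUnit_iff_isUnit_det e).1 he
    have hdeteT : IsUnit eᵀ.det := by rw [Matrix.det_transpose]; exact hdete
    set Hb := Matrix.fromBlocks c 0 0 e with hHbdef
    have hHbW : Hb * Matrix.fromBlocks b 0 0 r * Hbᵀ = Matrix.fromBlocks b' 0 0 r' := by
      rw [hHbdef, Matrix.fromBlocks_transpose, Matrix.fromBlocks_multiply,
        Matrix.fromBlocks_multiply]
      simp only [Matrix.mul_zero, Matrix.zero_mul, add_zero, zero_add, Matrix.mul_one,
        Matrix.transpose_zero]
      rw [hcb, her]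
    have hHbu : IsUnit Hb := isUnit_fromBlocks hc he
    have hHbTinv : (Hbᵀ)⁻¹ = Matrix.fromBlocks (cᵀ)⁻¹ 0 0 (eᵀ)⁻¹ := by
      apply Matrix.inv_eq_left_inv
      rw [hHbdef, Matrix.fromBlocks_transpose, Matrix.fromBlocks_multiply]
      simp only [Matrix.mul_zero, Matrix.zero_mul, add_zero, zero_add, Matrix.transpose_zero,
        Matrix.nonsing_inv_mul _ hdetcT, Matrix.nonsing_inv_mul _ hdeteT]
      exact Matrix.fromBlocks_one
    set HH := ((Hbᵀ)⁻¹).submatrix ⇑E ⇑E with hHHdef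
    have hHHu : IsUnit HH :=
      (Matrix.isUnit_submatrix_equiv E E).2 (isUnit_inv ((Matrix.isUnit_transpose Hb).2 hHbu))
    -- key equation (i): HH * Wsub⁻¹ * HHᵀ = W'sub⁻¹
    have keyW : HH * ((Matrix.fromBlocks b 0 0 r).submatrix ⇑E ⇑E)⁻¹ * HHᵀ
        = ((Matrix.fromBlocks b' 0 0 r').submatrix ⇑E ⇑E)⁻¹ := by
      have hblock : (Hbᵀ)⁻¹ * (Matrix.fromBlocks b 0 0 r)⁻¹ * ((Hbᵀ)⁻¹)ᵀ
          = (Matrix.fromBlocks b' 0 0 r')⁻¹ := by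
        rw [← hHbW, Matrix.mul_inv_rev, Matrix.mul_inv_rev, Matrix.transpose_nonsing_inv,
          Matrix.transpose_transpose, ← Matrix.mul_assoc]
      rw [hHHdef, Matrix.inv_submatrix_equiv, Matrix.inv_submatrix_equiv,
        Matrix.transpose_submatrix, Matrix.submatrix_mul_equiv, Matrix.submatrix_mul_equiv,
        hblock]
    -- key equation (ii): HH * Ey * cᵀ = Ey
    set Ey := (Matrix.fromRows (1 : Matrix (Fin d) (Fin d) ℝ)
      (0 : Matrix (Fin (n-d)) (Fin d) ℝ)) with hEydef
    have keyY : HH * (Ey.submatrix ⇑E id) * cᵀ = Ey.submatrix ⇑E id := by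
      have hb1 : (Hbᵀ)⁻¹ * Ey * cᵀ = Ey := by
        rw [hEydef, hHbTinv, Matrix.fromBlocks_mul_fromRows, Matrix.fromRows_mul]
        simp only [Matrix.mul_one, Matrix.mul_zero, Matrix.zero_mul, add_zero, zero_add,
          Matrix.nonsing_inv_mul _ hdetcT]
      calc HH * (Ey.submatrix ⇑E id) * cᵀ
          = ((Hbᵀ)⁻¹ * Ey).submatrix ⇑E id * cᵀ := by
            rw [hHHdef, Matrix.submatrix_mul_equiv]
        _ = ((Hbᵀ)⁻¹ * Ey * cᵀ).submatrix ⇑E id := by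
            have := Matrix.submatrix_mul ((Hbᵀ)⁻¹ * Ey) cᵀ
              ⇑E id id Function.bijective_id
            simpa using this.symm
        _ = Ey.submatrix ⇑E id := by rw [hb1]
    -- assemble
    have hdeth₁ : IsUnit h₁.det := (Matrix.isUnit_iff_isUnit_det h₁).1 hh₁
    refine ⟨h₁⁻¹ * (HH * h₀), c, (isUnit_inv hh₁).mul (hHHu.mul hh₀), hc, ?_, ?_⟩
    · have expand : h₁⁻¹ * (HH * h₀) * z * (h₁⁻¹ * (HH * h₀))ᵀ
          = h₁⁻¹ * (HH * (h₀ * z * h₀ᵀ) * HHᵀ * (h₁⁻¹)ᵀ) := by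
        rw [Matrix.transpose_mul, Matrix.transpose_mul]
        simp only [Matrix.mul_assoc]
      rw [expand, hz0, keyW]
      -- goal: h₁⁻¹ * (W'⁻¹ * (h₁⁻¹)ᵀ) = z'
      have hz1' : z' = h₁⁻¹ * (((Matrix.fromBlocks b' 0 0 r').submatrix ⇑E ⇑E)⁻¹ * (h₁⁻¹)ᵀ) := by
        rw [← hz1, Matrix.transpose_nonsing_inv]
        simp only [Matrix.mul_assoc]
        rw [Matrix.mul_nonsing_inv _ (by rw [Matrix.det_transpose]; exact hdeth₁),
          Matrix.mul_one, Matrix.nonsing_inv_mul_cancel_left _ _ hdeth₁]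
      rw [← hz1']
    · have expand : h₁⁻¹ * (HH * h₀) * y * cᵀ = h₁⁻¹ * (HH * (h₀ * y) * cᵀ) := by
        simp only [Matrix.mul_assoc]
      rw [expand, hy0, keyY, ← hy1, Matrix.nonsing_inv_mul_cancel_left _ _ hdeth₁]
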